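/- Let K = k1/k2 be nonzero differential-reduced with d1 = deg k1 and d2 = deg k2. Then the quotient E-vector space E[y]/M_K, where M_K = { k2·D(w) + k1·w : w ∈ E[y] }, has dimension at most max(d1, d2 − 1). -/

import Mathlib

open Polynomial

/-- `K = k1/k2` is differential-reduced: `gcd(k2, k1 - i·D(k2)) = 1` for all integers `i`. -/
def DiffReduced {E : Type*} [Field E] (k1 k2 : E[X]) : Prop :=
  ∀ i : ℤ, IsCoprime k2 (k1 - (i : E[X]) * derivative k2)

/-- The derivation `d/dy` on the field of rational functions `E(y)`. -/
noncomputable def Dr {E : Type*} [Field E] (f : RatFunc E) : RatFunc E :=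
  (algebraMap E[X] (RatFunc E) (derivative f.num) * algebraMap E[X] (RatFunc E) f.denom -
      algebraMap E[X] (RatFunc E) f.num * algebraMap E[X] (RatFunc E) (derivative f.denom)) /
    (algebraMap E[X] (RatFunc E) f.denom) ^ 2

section Aux

variable {E : Type*} [Field E]

/-- Degree bound for `L w = k2 * w' + k1 * w`. -/
private lemma aux_natDegree_L_le (k1 k2 w : E[X]) (m : ℕ) (hw : w.natDegree ≤ m)
    (h1 : k1.natDegree ≤ max k1.natDegree (k2.natDegree - 1))
    (h2 : k2.natDegree ≤ max k1.natDegree (k2.natDegree - 1) + 1) :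
    (k2 * derivative w + k1 * w).natDegree ≤ m + max k1.natDegree (k2.natDegree - 1) := by
  set N := max k1.natDegree (k2.natDegree - 1) with hN
  refine (natDegree_add_le _ _).trans (max_le ?_ ?_)
  · by_cases hd : derivative w = 0
    · simp [hd]
    · have hw1 : 1 ≤ w.natDegree := by
        by_contra hcon
        have : w = C (w.coeff 0) := eq_C_of_natDegree_le_zero (by omega)
        exact hd (by rw [this, derivative_C])
      have := natDegree_derivative_le w
      have := natDegree_mul_le (p := k2) (q := derivative w)
      omega
  · have := natDegree_mul_le (p := k1) (q := w)
    omega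

/-- Top coefficient of `L w`. -/
private lemma aux_coeff_L_top (k1 k2 w : E[X]) (m : ℕ) (hw : w.natDegree ≤ m)
    (h1 : k1.natDegree ≤ max k1.natDegree (k2.natDegree - 1))
    (h2 : k2.natDegree ≤ max k1.natDegree (k2.natDegree - 1) + 1) :
    (k2 * derivative w + k1 * w).coeff (m + max k1.natDegree (k2.natDegree - 1)) =
      ((m : E) * k2.coeff (max k1.natDegree (k2.natDegree - 1) + 1)
        + k1.coeff (max k1.natDegree (k2.natDegree - 1))) * w.coeff m := by
  set N := max k1.natDegree (k2.natDegree - 1) with hN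
  have hk1w : (k1 * w).coeff (m + N) = k1.coeff N * w.coeff m := by
    rw [add_comm m N]
    exact coeff_mul_add_eq_of_natDegree_le h1 hw
  rw [coeff_add, hk1w]
  rcases m with _ | m
  · have hwC : w = C (w.coeff 0) := eq_C_of_natDegree_le_zero (by omega)
    rw [hwC, derivative_C, mul_zero, coeff_zero]
    push_cast
    ring
  · have hd : (derivative w).natDegree ≤ m := (natDegree_derivative_le w).trans (by omega)
    have : m + 1 + N = (N + 1) + m := by omega
    rw [this, coeff_mul_add_eq_of_natDegree_le h2 hd, coeff_derivative]
    push_cast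
    ring

/-- Injectivity of `w ↦ k2 * w' + k1 * w` for differential-reduced `k1/k2`. -/
private lemma aux_L_inj (k1 k2 : E[X]) (hk1 : k1 ≠ 0) (hk2 : k2 ≠ 0)
    (hcop : IsCoprime k1 k2) (hdr : DiffReduced k1 k2) (w : E[X])
    (h : k2 * derivative w + k1 * w = 0) : w = 0 := by
  by_contra hw
  have heq : k1 * w = k2 * (-derivative w) := by linear_combination h
  by_cases hdeg : k2.natDegree = 0
  · -- k2 constant case
    have hd : derivative w ≠ 0 := by
      intro hd0
      rw [hd0, mul_zero, zero_add] at h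
      exact hw ((mul_eq_zero.mp h).resolve_left hk1)
    have hw1 : 1 ≤ w.natDegree := by
      by_contra hcon
      have : w = C (w.coeff 0) := eq_C_of_natDegree_le_zero (by omega)
      exact hd (by rw [this, derivative_C])
    have e1 : (k1 * w).natDegree = k1.natDegree + w.natDegree := natDegree_mul hk1 hw
    have e2 : (k2 * -derivative w).natDegree = k2.natDegree + (-derivative w).natDegree :=
      natDegree_mul hk2 (by simpa using hd)
    rw [natDegree_neg] at e2
    have := natDegree_derivative_le w
    rw [heq] at e1
    omega
  · -- k2 nonconstant
    have hk2nu : ¬ IsUnit k2 := fun hu => hdeg (natDegree_eq_zero_of_isUnit hu)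
    obtain ⟨p, hp, hpk2⟩ := WfDvdMonoid.exists_irreducible_factor hk2nu hk2
    have hprime : Prime p := (UniqueFactorizationMonoid.irreducible_iff_prime).mp hp
    have hk2w : k2 ∣ w := (hcop.symm).dvd_of_dvd_mul_left ⟨-derivative w, heq⟩
    have hpw : p ∣ w := hpk2.trans hk2w
    obtain ⟨a, v, hpv, hwf⟩ := WfDvdMonoid.max_power_factor hw hp
    obtain ⟨b, u, hpu, hk2f⟩ := WfDvdMonoid.max_power_factor hk2 hp
    have hpk1 : ¬ p ∣ k1 := fun hd => hp.not_isUnit (hcop.isUnit_of_dvd' hd hpk2)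
    have ha : 1 ≤ a := by
      rcases Nat.eq_zero_or_pos a with h0 | h; swap; · exact h
      exfalso; apply hpv; rw [h0, pow_zero, one_mul] at hwf; exact hwf ▸ hpw
    have hb : 1 ≤ b := by
      rcases Nat.eq_zero_or_pos b with h0 | h; swap; · exact h
      exfalso; apply hpu; rw [h0, pow_zero, one_mul] at hk2f; exact hk2f ▸ hpk2
    obtain ⟨a', rfl⟩ : ∃ a', a = a' + 1 := ⟨a - 1, by omega⟩
    obtain ⟨b', rfl⟩ : ∃ b', b = b' + 1 := ⟨b - 1, by omega⟩
    have hpne : (p : E[X]) ^ (a' + 1) ≠ 0 := pow_ne_zero _ hp.ne_zero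
    have key : p ^ b' * (C ((a' + 1 : ℕ) : E) * u * derivative p * v)
        + p ^ (b' + 1) * (u * derivative v) + k1 * v = 0 := by
      apply mul_left_cancel₀ hpne
      rw [mul_zero, ← h, hwf, hk2f, derivative_mul, derivative_pow]
      simp only [Nat.add_sub_cancel]
      ring
    rcases Nat.eq_zero_or_pos b' with hb0 | hb1
    · -- b = 1 : use DiffReduced
      subst hb0
      have hdvd : p ∣ (C ((a' + 1 : ℕ) : E) * u * derivative p + k1) * v :=
        ⟨-(u * derivative v), by linear_combination key⟩
      have hd1 : p ∣ C ((a' + 1 : ℕ) : E) * u * derivative p + k1 :=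
        (hprime.dvd_mul.mp hdvd).resolve_right hpv
      set i : ℤ := -((a' : ℤ) + 1) with hidef
      have hi : ((i : ℤ) : E[X]) = -C ((a' + 1 : ℕ) : E) := by
        simp [hidef, C_eq_natCast]
      have hrepr : k1 - (i : E[X]) * derivative k2 =
          (C ((a' + 1 : ℕ) : E) * u * derivative p + k1)
            + p * (C ((a' + 1 : ℕ) : E) * derivative u) := by
        rw [hk2f, hi, derivative_mul, derivative_pow]
        simp only [zero_add, Nat.add_sub_cancel, Nat.cast_one, C_1, pow_one]
        ring
      have hd2 : p ∣ k1 - (i : E[X]) * derivative k2 := by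
        rw [hrepr]; exact dvd_add hd1 (Dvd.intro _ rfl)
      exact hp.not_isUnit ((hdr i).isUnit_of_dvd' hpk2 hd2)
    · -- b ≥ 2 : p ∣ k1 * v, contradiction
      obtain ⟨b'', rfl⟩ : ∃ b'', b' = b'' + 1 := ⟨b' - 1, by omega⟩
      have hdvd : p ∣ k1 * v :=
        ⟨-(p ^ b'' * (C ((a' + 1 : ℕ) : E) * u * derivative p * v))
          - p ^ (b'' + 1) * (u * derivative v), by linear_combination key⟩
      rcases hprime.dvd_mul.mp hdvd with h' | h'
      · exact hpk1 h'
      · exact hpv h'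

/-- Degree-reduction spanning principle. -/
private lemma aux_span (G : Submodule E E[X])
    (hred : ∀ p : E[X], p ≠ 0 → ∃ e, e ∈ G ∧ e.natDegree ≤ p.natDegree ∧
      e.coeff p.natDegree = p.coeff p.natDegree) :
    ∀ p : E[X], p ∈ G := by
  have H : ∀ n, ∀ p : E[X], p.natDegree ≤ n → p ∈ G := by
    intro n
    induction n using Nat.strong_induction_on with
    | _ n ih =>
      intro p hpn
      by_cases hp : p = 0
      · rw [hp]; exact G.zero_mem
      obtain ⟨e, heG, hed, hec⟩ := hred p hp
      by_cases hpe : p - e = 0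
      · rw [sub_eq_zero] at hpe; rw [hpe]; exact heG
      have hle : (p - e).natDegree ≤ p.natDegree :=
        (natDegree_sub_le p e).trans (by omega)
      have hlt : (p - e).natDegree < p.natDegree := by
        rcases lt_or_eq_of_le hle with h | h
        · exact h
        · exfalso
          apply hpe
          have : (p - e).coeff ((p - e).natDegree) = 0 := by
            rw [h, coeff_sub, hec, sub_self]
          exact leadingCoeff_eq_zero.mp this
      have hmem : p - e ∈ G := ih (p - e).natDegree (by omega) _ le_rfl
      have : p = (p - e) + e := by ring
      rw [this]; exact G.add_mem hmem heG
  exact fun p => H p.natDegree p le_rfl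

/-- If `E[X]` is covered by `M` plus the span of `t` monomials, then the quotient has
rank at most `t`. -/
private lemma aux_rank (M : Submodule E E[X]) (t : ℕ) (g : Fin t → ℕ)
    (hspan : ∀ p : E[X], p ∈ M ⊔ Submodule.span E (Set.range fun j => (X : E[X]) ^ (g j))) :
    Module.rank E (E[X] ⧸ M) ≤ (t : Cardinal) := by
  have htop : Submodule.span E (Set.range fun j => M.mkQ ((X : E[X]) ^ (g j))) = ⊤ := by
    rw [eq_top_iff]
    rintro q -
    obtain ⟨p, rfl⟩ := M.mkQ_surjective q
    have himg : M.mkQ p ∈ Submodule.map M.mkQ (M ⊔ Submodule.span E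
        (Set.range fun j => (X : E[X]) ^ (g j))) := ⟨p, hspan p, rfl⟩
    rw [Submodule.map_sup, Submodule.map_span] at himg
    have hbot : Submodule.map M.mkQ M = ⊥ := by
      rw [eq_bot_iff]
      rintro x ⟨p', hp', rfl⟩
      simpa using (Submodule.Quotient.mk_eq_zero M).mpr hp'
    rw [hbot, bot_sup_eq, ← Set.range_comp] at himg
    exact himg
  have h1 : Module.rank E (E[X] ⧸ M) =
      Module.rank E ↥(Submodule.span E (Set.range fun j => M.mkQ ((X : E[X]) ^ (g j)))) := by
    rw [htop, rank_top]
  rw [h1]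
  refine (rank_span_le _).trans ?_
  have := Cardinal.mk_range_le_lift (f := fun j => M.mkQ ((X : E[X]) ^ (g j)))
  simpa using this

/-- In the degenerate case there is a nonzero element of the range of low degree. -/
private lemma aux_exists_low (k1 k2 : E[X]) (m0 : ℕ)
    (h1 : k1.natDegree ≤ max k1.natDegree (k2.natDegree - 1))
    (h2 : k2.natDegree ≤ max k1.natDegree (k2.natDegree - 1) + 1)
    (hinj : ∀ w : E[X], k2 * derivative w + k1 * w = 0 → w = 0)
    (hc : (m0 : E) * k2.coeff (max k1.natDegree (k2.natDegree - 1) + 1)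
      + k1.coeff (max k1.natDegree (k2.natDegree - 1)) = 0) :
    ∃ w : E[X], (k2 * derivative w + k1 * w) ≠ 0 ∧
      (k2 * derivative w + k1 * w).natDegree < max k1.natDegree (k2.natDegree - 1) := by
  set N := max k1.natDegree (k2.natDegree - 1) with hN
  set Lm : E[X] →ₗ[E] E[X] :=
    LinearMap.mulLeft E k2 ∘ₗ (derivative : E[X] →ₗ[E] E[X]) + LinearMap.mulLeft E k1 with hLm
  have hLm_apply : ∀ w : E[X], Lm w = k2 * derivative w + k1 * w := fun w => rfl
  haveI : FiniteDimensional E ↥(degreeLT E (m0 + 1)) :=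
    (degreeLTEquiv E (m0 + 1)).symm.finiteDimensional
  set Φ : ↥(degreeLT E (m0 + 1)) →ₗ[E] (Fin m0 → E) :=
    (LinearMap.pi fun j : Fin m0 => lcoeff E (N + j)) ∘ₗ Lm ∘ₗ (degreeLT E (m0 + 1)).subtype
    with hΦ
  have hfr1 : Module.finrank E ↥(degreeLT E (m0 + 1)) = m0 + 1 := by
    rw [(degreeLTEquiv E (m0 + 1)).finrank_eq, Module.finrank_fin_fun]
  have hfr2 : Module.finrank E (Fin m0 → E) = m0 := Module.finrank_fin_fun E
  have hker : LinearMap.ker Φ ≠ ⊥ :=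
    LinearMap.ker_ne_bot_of_finrank_lt (by rw [hfr1, hfr2]; omega)
  obtain ⟨w, hwker, hw0⟩ := (Submodule.ne_bot_iff _).mp hker
  have hwne : (w : E[X]) ≠ 0 := fun h => hw0 (Subtype.ext h)
  refine ⟨(w : E[X]), ?_, ?_⟩
  · intro h; exact hwne (hinj _ h)
  · set r := k2 * derivative (w : E[X]) + k1 * (w : E[X]) with hr
    have hwdeg : (w : E[X]).natDegree ≤ m0 := by
      have := mem_degreeLT.mp w.2
      have := (natDegree_lt_iff_degree_lt hwne).mpr (by exact_mod_cast this)
      omega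
    have hcoeffs : ∀ j : Fin m0, r.coeff (N + j) = 0 := by
      intro j
      have : Φ w = 0 := hwker
      have := congrFun this j
      simpa [hr, coeff_add, hΦ, hLm_apply] using this
    have htopc : r.coeff (m0 + N) = 0 := by
      rw [hr, aux_coeff_L_top k1 k2 _ _ hwdeg h1 h2, hc, zero_mul]
    have hdeg : r.natDegree ≤ m0 + N := aux_natDegree_L_le k1 k2 _ _ hwdeg h1 h2
    have hrne : r ≠ 0 := fun h => hwne (hinj _ h)
    rcases lt_or_ge r.natDegree N with h | h
    · exact h
    exfalso
    apply hrne
    apply leadingCoeff_eq_zero.mp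
    rcases eq_or_lt_of_le hdeg with he | hlt
    · rw [leadingCoeff, he]; exact htopc
    · have hj : r.natDegree - N < m0 := by omega
      have := hcoeffs ⟨r.natDegree - N, hj⟩
      rw [leadingCoeff]
      have heq : N + (r.natDegree - N) = r.natDegree := by omega
      rw [← heq]
      exact this

end Aux

theorem stmt_6 {E : Type*} [Field E] [CharZero E] (k1 k2 : E[X]) (hk1 : k1 ≠ 0)
    (hk2 : k2 ≠ 0) (hcop : IsCoprime k1 k2) (hdr : DiffReduced k1 k2) :
    Module.rank E
        (E[X] ⧸ LinearMap.range
          (LinearMap.mulLeft E k2 ∘ₗ (derivative : E[X] →ₗ[E] E[X]) +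
            LinearMap.mulLeft E k1)) ≤
      ((max k1.natDegree (k2.natDegree - 1) : ℕ) : Cardinal) := by
  set N := max k1.natDegree (k2.natDegree - 1) with hN
  have h1 : k1.natDegree ≤ N := le_max_left _ _
  have h2 : k2.natDegree ≤ N + 1 := by
    have := le_max_right k1.natDegree (k2.natDegree - 1)
    omega
  set L : E[X] →ₗ[E] E[X] :=
    LinearMap.mulLeft E k2 ∘ₗ (derivative : E[X] →ₗ[E] E[X]) + LinearMap.mulLeft E k1 with hL
  have hLa : ∀ w : E[X], L w = k2 * derivative w + k1 * w := fun w => rfl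
  set M := LinearMap.range L with hM
  set α := k1.coeff N with hα
  set β := k2.coeff (N + 1) with hβdef
  have hαβ : α = 0 → β ≠ 0 := by
    intro ha hb
    have hd1 : k1.natDegree ≠ N := by
      intro h
      exact hk1 (leadingCoeff_eq_zero.mp (by rw [leadingCoeff, h]; exact ha))
    have hd1' : k1.natDegree < N := lt_of_le_of_ne h1 hd1
    have hNk2 : k2.natDegree - 1 = N := by omega
    have hk2N : k2.natDegree = N + 1 := by omega
    exact hk2 (leadingCoeff_eq_zero.mp (by rw [leadingCoeff, hk2N]; exact hb))
  by_cases hB : ∃ m : ℕ, (m : E) * β + α = 0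
  · -- degenerate case
    obtain ⟨m0, hm0⟩ := hB
    have hβ : β ≠ 0 := by
      intro hb
      apply hαβ ?_ hb
      rw [hb, mul_zero, zero_add] at hm0
      exact hm0
    have hcne : ∀ m : ℕ, m ≠ m0 → (m : E) * β + α ≠ 0 := by
      intro m hm hzero
      have hmm : ((m : E) - (m0 : E)) * β = 0 := by linear_combination hzero - hm0
      rcases mul_eq_zero.mp hmm with h | h
      · have : (m : E) = (m0 : E) := by linear_combination h
        exact hm (Nat.cast_injective this)
      · exact hβ h
    have hinj : ∀ w : E[X], k2 * derivative w + k1 * w = 0 → w = 0 :=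
      aux_L_inj k1 k2 hk1 hk2 hcop hdr
    obtain ⟨w0, hr0, hrdeg⟩ := aux_exists_low k1 k2 m0 h1 h2 hinj hm0
    set r := k2 * derivative w0 + k1 * w0 with hrdef
    set nr := r.natDegree with hnrdef
    have hnr : nr < N := hrdeg
    refine aux_rank M N (fun j => if (j : ℕ) = nr then m0 + N else (j : ℕ)) (aux_span _ ?_)
    intro p hp
    by_cases hcase1 : p.natDegree = nr
    · refine ⟨(p.coeff p.natDegree / r.leadingCoeff) • r, ?_, ?_, ?_⟩
      · exact Submodule.mem_sup_left (Submodule.smul_mem _ _ ⟨w0, hLa w0⟩)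
      · exact (natDegree_smul_le _ _).trans (by rw [hcase1])
      · rw [coeff_smul, hcase1, smul_eq_mul, ← leadingCoeff,
          div_mul_cancel₀ _ (leadingCoeff_ne_zero.mpr hr0)]
    by_cases hcase2 : p.natDegree < N
    · refine ⟨p.coeff p.natDegree • (X : E[X]) ^ p.natDegree, ?_, ?_, ?_⟩
      · apply Submodule.mem_sup_right
        refine Submodule.smul_mem _ _ (Submodule.subset_span ⟨⟨p.natDegree, hcase2⟩, ?_⟩)
        simp [hcase1]
      · exact (natDegree_smul_le _ _).trans (by simp)
      · simp [coeff_smul, coeff_X_pow]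
    by_cases hcase3 : p.natDegree = m0 + N
    · refine ⟨p.coeff p.natDegree • (X : E[X]) ^ (m0 + N), ?_, ?_, ?_⟩
      · apply Submodule.mem_sup_right
        refine Submodule.smul_mem _ _ (Submodule.subset_span ⟨⟨nr, hnr⟩, ?_⟩)
        simp
      · refine (natDegree_smul_le _ _).trans (by simp [hcase3])
      · rw [coeff_smul, hcase3, smul_eq_mul, coeff_X_pow, if_pos rfl, mul_one]
    · push_neg at hcase2
      set m := p.natDegree - N with hmdef
      have hm : p.natDegree = m + N := by omega
      have hmne : m ≠ m0 := by omega
      refine ⟨(p.coeff p.natDegree / ((m : E) * β + α)) •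
        (k2 * derivative ((X : E[X]) ^ m) + k1 * (X : E[X]) ^ m), ?_, ?_, ?_⟩
      · exact Submodule.mem_sup_left (Submodule.smul_mem _ _ ⟨(X : E[X]) ^ m, hLa _⟩)
      · refine (natDegree_smul_le _ _).trans ?_
        rw [hm]
        exact aux_natDegree_L_le k1 k2 _ _ (by simp) h1 h2
      · rw [coeff_smul, hm, aux_coeff_L_top k1 k2 _ _ (by simp) h1 h2, coeff_X_pow,
          if_pos rfl, mul_one, smul_eq_mul, div_mul_cancel₀ _ (hcne m hmne)]
  · -- non-degenerate case
    push_neg at hB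
    refine aux_rank M N (fun j => (j : ℕ)) (aux_span _ ?_)
    intro p hp
    by_cases hcase : p.natDegree < N
    · refine ⟨p.coeff p.natDegree • (X : E[X]) ^ p.natDegree, ?_, ?_, ?_⟩
      · exact Submodule.mem_sup_right
          (Submodule.smul_mem _ _ (Submodule.subset_span ⟨⟨p.natDegree, hcase⟩, rfl⟩))
      · exact (natDegree_smul_le _ _).trans (by simp)
      · simp [coeff_smul, coeff_X_pow]
    · push_neg at hcase
      set m := p.natDegree - N with hmdef
      have hm : p.natDegree = m + N := by omega
      refine ⟨(p.coeff p.natDegree / ((m : E) * β + α)) •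
        (k2 * derivative ((X : E[X]) ^ m) + k1 * (X : E[X]) ^ m), ?_, ?_, ?_⟩
      · exact Submodule.mem_sup_left (Submodule.smul_mem _ _ ⟨(X : E[X]) ^ m, hLa _⟩)
      · refine (natDegree_smul_le _ _).trans ?_
        rw [hm]
        exact aux_natDegree_L_le k1 k2 _ _ (by simp) h1 h2
      · rw [coeff_smul, hm, aux_coeff_L_top k1 k2 _ _ (by simp) h1 h2, coeff_X_pow,
          if_pos rfl, mul_one, smul_eq_mul, div_mul_cancel₀ _ (hB m)]
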